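/- Let $k:[0,L]\times\mathbb{R}\to\mathbb{R}$ be such that $k(x,y)$ is 1-periodic in $y$, satisfies $0<\alpha\le k(x,y)\le\beta$, and $x\mapsto k(x,y)$ is Lipschitz uniformly in $y$. Let $G:[0,L]\to\mathbb{R}$ be Lipschitz. Define $k_0(x)=(\int_0^1 k(x,y)^{-1}dy)^{-1}$. Then there is a constant $C$ such that for all $\epsilon\in(0,1]$, $\left|\int_0^L k(z,z/\epsilon)^{-1}G(z)\,dz - \int_0^L k_0(z)^{-1}G(z)\,dz\right|\le C\epsilon$. -/
import Mathlib

open MeasureTheory intervalIntegral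

private lemma inv_diff_bound {α a b : ℝ} (hα : 0 < α) (ha : α ≤ a) (hb : α ≤ b) :
    |a⁻¹ - b⁻¹| ≤ |b - a| / α ^ 2 := by
  have ha0 : (0:ℝ) < a := hα.trans_le ha
  have hb0 : (0:ℝ) < b := hα.trans_le hb
  rw [inv_sub_inv ha0.ne' hb0.ne', abs_div, abs_of_pos (mul_pos ha0 hb0)]
  have h2 : α ^ 2 ≤ a * b := by nlinarith
  gcongr

set_option maxHeartbeats 2000000 in
/-- Averaging lemma: oscillatory integrals of `k(z, z/ε)⁻¹` against a Lipschitz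
function converge at rate `O(ε)` to the integral against the harmonic mean. -/
theorem oscillatory_average_rate (L : ℝ) (hL : 0 < L) (k : ℝ → ℝ → ℝ)
    (α β Kk KG : ℝ) (hα : 0 < α)
    (hcont : Continuous fun q : ℝ × ℝ => k q.1 q.2)
    (hper : ∀ x y, k x (y + 1) = k x y)
    (hlb : ∀ x y, α ≤ k x y) (hub : ∀ x y, k x y ≤ β)
    (hLip : ∀ y, LipschitzOnWith (Real.toNNReal Kk) (fun x => k x y) (Set.Icc 0 L))
    (G : ℝ → ℝ) (hG : LipschitzOnWith (Real.toNNReal KG) G (Set.Icc 0 L))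
    (k₀ : ℝ → ℝ) (hk₀ : ∀ x, k₀ x = (∫ y in (0:ℝ)..1, (k x y)⁻¹)⁻¹) :
    ∃ C : ℝ, ∀ ε ∈ Set.Ioc (0:ℝ) 1,
      |(∫ z in (0:ℝ)..L, (k z (z / ε))⁻¹ * G z) -
        ∫ z in (0:ℝ)..L, (k₀ z)⁻¹ * G z| ≤ C * ε := by
  have hβ : 0 < β := hα.trans_le ((hlb 0 0).trans (hub 0 0))
  set K : ℝ := max Kk 0 with hKdef
  have hK0 : 0 ≤ K := le_max_right _ _
  set KG' : ℝ := max KG 0 with hKG'def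
  have hKG0 : 0 ≤ KG' := le_max_right _ _
  have hkne : ∀ x y, k x y ≠ 0 := fun x y => (hα.trans_le (hlb x y)).ne'
  -- continuity of y ↦ (k x y)⁻¹
  have hky : ∀ x, Continuous fun y => (k x y)⁻¹ := fun x =>
    ((hcont.comp (continuous_const.prodMk continuous_id)).inv₀ fun y => hkne x y)
  set m₀ : ℝ → ℝ := fun x => ∫ y in (0:ℝ)..1, (k x y)⁻¹ with hm₀def
  have hkinv_ub : ∀ x y, (k x y)⁻¹ ≤ α⁻¹ := fun x y =>
    inv_anti₀ hα (hlb x y)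
  have hkinv_lb : ∀ x y, β⁻¹ ≤ (k x y)⁻¹ := fun x y =>
    inv_anti₀ (hα.trans_le (hlb x y)) (hub x y)
  have hm₀lb : ∀ x, β⁻¹ ≤ m₀ x := by
    intro x
    have : ∫ y in (0:ℝ)..1, (β:ℝ)⁻¹ ≤ ∫ y in (0:ℝ)..1, (k x y)⁻¹ := by
      apply intervalIntegral.integral_mono_on zero_le_one
        intervalIntegrable_const ((hky x).intervalIntegrable _ _)
      intro y _; exact hkinv_lb x y
    simpa using this
  have hm₀ub : ∀ x, m₀ x ≤ α⁻¹ := by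
    intro x
    have : ∫ y in (0:ℝ)..1, (k x y)⁻¹ ≤ ∫ y in (0:ℝ)..1, (α:ℝ)⁻¹ := by
      apply intervalIntegral.integral_mono_on zero_le_one
        ((hky x).intervalIntegrable _ _) intervalIntegrable_const
      intro y _; exact hkinv_ub x y
    simpa using this
  have hm₀pos : ∀ x, 0 < m₀ x := fun x => lt_of_lt_of_le (inv_pos.mpr hβ) (hm₀lb x)
  have hk₀inv : ∀ x, (k₀ x)⁻¹ = m₀ x := fun x => by rw [hk₀ x, inv_inv]
  -- Lipschitz bound for x ↦ (k x y)⁻¹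
  have hkLip : ∀ y : ℝ, ∀ x ∈ Set.Icc (0:ℝ) L, ∀ z ∈ Set.Icc (0:ℝ) L,
      |(k x y)⁻¹ - (k z y)⁻¹| ≤ K / α ^ 2 * |x - z| := by
    intro y x hx z hz
    have hd := (hLip y).dist_le_mul x hx z hz
    rw [Real.dist_eq, Real.dist_eq, Real.coe_toNNReal'] at hd
    calc |(k x y)⁻¹ - (k z y)⁻¹| ≤ |k z y - k x y| / α ^ 2 :=
          inv_diff_bound hα (hlb x y) (hlb z y)
      _ ≤ (K * |x - z|) / α ^ 2 := by
          rw [abs_sub_comm]; gcongr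
      _ = K / α ^ 2 * |x - z| := by ring
  -- Lipschitz bound for m₀
  have hm₀Lip : ∀ x ∈ Set.Icc (0:ℝ) L, ∀ z ∈ Set.Icc (0:ℝ) L,
      |m₀ x - m₀ z| ≤ K / α ^ 2 * |x - z| := by
    intro x hx z hz
    have heq : m₀ x - m₀ z = ∫ y in (0:ℝ)..1, ((k x y)⁻¹ - (k z y)⁻¹) :=
      (intervalIntegral.integral_sub ((hky x).intervalIntegrable _ _)
        ((hky z).intervalIntegrable _ _)).symm
    rw [heq]
    have := intervalIntegral.norm_integral_le_of_norm_le_const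
      (C := K / α ^ 2 * |x - z|) (f := fun y => (k x y)⁻¹ - (k z y)⁻¹)
      (a := (0:ℝ)) (b := 1) (fun y _ => by
        rw [Real.norm_eq_abs]; exact hkLip y x hx z hz)
    simpa using this
  have hm₀cont : ContinuousOn m₀ (Set.Icc 0 L) := by
    apply LipschitzOnWith.continuousOn (K := Real.toNNReal (K / α ^ 2))
    apply LipschitzOnWith.of_dist_le_mul
    intro x hx z hz
    rw [Real.dist_eq, Real.dist_eq, Real.coe_toNNReal _ (by positivity)]
    exact hm₀Lip x hx z hz
  -- bounds for G
  have hGd : ∀ x ∈ Set.Icc (0:ℝ) L, ∀ z ∈ Set.Icc (0:ℝ) L, |G x - G z| ≤ KG' * |x - z| := by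
    intro x hx z hz
    have hd := hG.dist_le_mul x hx z hz
    rwa [Real.dist_eq, Real.dist_eq, Real.coe_toNNReal'] at hd
  set MG : ℝ := |G 0| + KG' * L with hMGdef
  have hMG0 : 0 ≤ MG := by positivity
  have hGb : ∀ z ∈ Set.Icc (0:ℝ) L, |G z| ≤ MG := by
    intro z hz
    have h0 : (0:ℝ) ∈ Set.Icc (0:ℝ) L := ⟨le_refl _, hL.le⟩
    have h1 := hGd z hz 0 h0
    have : |z - 0| ≤ L := by rw [sub_zero, abs_of_nonneg hz.1]; exact hz.2
    calc |G z| ≤ |G z - G 0| + |G 0| := by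
          have := abs_add_le (G z - G 0) (G 0); simpa using this
      _ ≤ KG' * L + |G 0| := by
          have := h1.trans (by nlinarith : KG' * |z - 0| ≤ KG' * L)
          linarith
      _ = MG := by rw [hMGdef]; ring
  -- constants
  set C₂ : ℝ := 2 * K / α ^ 2 * MG + (α⁻¹ + α⁻¹) * KG' with hC₂def
  have hC₂0 : 0 ≤ C₂ := by positivity
  set MF : ℝ := (α⁻¹ + α⁻¹) * MG with hMFdef
  have hMF0 : 0 ≤ MF := by positivity
  refine ⟨C₂ * L + MF, ?_⟩
  rintro ε ⟨hε0, hε1⟩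
  have hεne : ε ≠ 0 := hε0.ne'
  -- continuity of the oscillatory part
  have c1 : Continuous fun z : ℝ => (k z (z / ε))⁻¹ :=
    (hcont.comp (continuous_id.prodMk (continuous_id.div_const ε))).inv₀
      fun z => hkne z (z / ε)
  set F : ℝ → ℝ := fun z => ((k z (z / ε))⁻¹ - m₀ z) * G z with hFdef
  have hFcont : ContinuousOn F (Set.Icc 0 L) :=
    ((c1.continuousOn.sub hm₀cont).mul hG.continuousOn)
  have hFint : ∀ a b : ℝ, Set.uIcc a b ⊆ Set.Icc 0 L → IntervalIntegrable F volume a b :=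
    fun a b hsub => (hFcont.mono hsub).intervalIntegrable
  -- pointwise bound for F
  have hFb : ∀ z ∈ Set.Icc (0:ℝ) L, |F z| ≤ MF := by
    intro z hz
    rw [hFdef]
    simp only
    rw [abs_mul]
    have h1 : |(k z (z / ε))⁻¹ - m₀ z| ≤ α⁻¹ + α⁻¹ := by
      have := abs_sub (k z (z / ε))⁻¹ (m₀ z)
      have ha : |(k z (z / ε))⁻¹| ≤ α⁻¹ := by
        rw [abs_of_pos (inv_pos.mpr (hα.trans_le (hlb _ _)))]; exact hkinv_ub _ _
      have hb : |m₀ z| ≤ α⁻¹ := by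
        rw [abs_of_pos (hm₀pos z)]; exact hm₀ub z
      calc |(k z (z / ε))⁻¹ - m₀ z| ≤ |(k z (z / ε))⁻¹| + |m₀ z| := abs_sub _ _
        _ ≤ α⁻¹ + α⁻¹ := add_le_add ha hb
    calc |(k z (z / ε))⁻¹ - m₀ z| * |G z| ≤ (α⁻¹ + α⁻¹) * MG := by
          apply mul_le_mul h1 (hGb z hz) (abs_nonneg _) (by positivity)
      _ = MF := hMFdef.symm
  -- the frozen-coefficient integral vanishes on period cells
  have hzero : ∀ (x : ℝ) (j : ℕ),
      (∫ z in ((j:ℝ)*ε)..((j:ℝ)*ε + ε), ((k x (z / ε))⁻¹ - m₀ x)) = 0 := by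
    intro x j
    have hper' : Function.Periodic (fun y => (k x y)⁻¹ - m₀ x) 1 := by
      intro y; simp [hper x y]
    have h1 : (∫ z in ((j:ℝ)*ε)..((j:ℝ)*ε + ε), ((k x (z / ε))⁻¹ - m₀ x))
        = ε • ∫ y in (((j:ℝ)*ε)/ε)..((((j:ℝ)*ε + ε))/ε), ((k x y)⁻¹ - m₀ x) :=
      intervalIntegral.integral_comp_div (f := fun y => (k x y)⁻¹ - m₀ x) hεne
    rw [h1]
    have h2 : ((j:ℝ)*ε)/ε = (j:ℝ) := mul_div_cancel_right₀ _ hεne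
    have h3 : ((j:ℝ)*ε + ε)/ε = (j:ℝ) + 1 := by
      rw [add_div, mul_div_cancel_right₀ _ hεne, div_self hεne]
    rw [h2, h3]
    have h4 : (∫ y in ((j:ℝ))..((j:ℝ) + 1), ((k x y)⁻¹ - m₀ x))
        = ∫ y in (0:ℝ)..(0 + 1), ((k x y)⁻¹ - m₀ x) :=
      hper'.intervalIntegral_add_eq (j:ℝ) 0
    rw [h4]
    have h5 : (∫ y in (0:ℝ)..(0 + 1:ℝ), ((k x y)⁻¹ - m₀ x)) = 0 := by
      rw [zero_add,
        intervalIntegral.integral_sub ((hky x).intervalIntegrable _ _) intervalIntegrable_const,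
        intervalIntegral.integral_const]
      simp [hm₀def]
    rw [h5, smul_zero]
  -- per-interval estimate
  have key : ∀ j : ℕ, (j:ℝ)*ε + ε ≤ L →
      |∫ z in ((j:ℝ)*ε)..((j:ℝ)*ε + ε), F z| ≤ C₂ * ε ^ 2 := by
    intro j hjL
    set a : ℝ := (j:ℝ)*ε with hadef
    have ha0 : 0 ≤ a := by positivity
    have haL : a ∈ Set.Icc (0:ℝ) L := ⟨ha0, by linarith⟩
    have hsub : Set.uIcc a (a + ε) ⊆ Set.Icc 0 L := by
      rw [Set.uIcc_of_le (by linarith)]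
      exact Set.Icc_subset_Icc ha0 hjL
    set ψ : ℝ → ℝ := fun z => ((k a (z / ε))⁻¹ - m₀ a) * G a with hψdef
    have hψcont : Continuous ψ := by
      apply Continuous.mul _ continuous_const
      exact ((hky a).comp (continuous_id.div_const ε)).sub continuous_const
    have hψ0 : (∫ z in a..(a + ε), ψ z) = 0 := by
      rw [hψdef]
      rw [intervalIntegral.integral_mul_const, hzero a j, zero_mul]
    have heq : (∫ z in a..(a + ε), F z) = ∫ z in a..(a + ε), (F z - ψ z) := by
      rw [intervalIntegral.integral_sub (hFint _ _ hsub) (hψcont.intervalIntegrable _ _), hψ0,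
        sub_zero]
    rw [heq]
    have hbound : ∀ z ∈ Set.uIoc a (a + ε), ‖F z - ψ z‖ ≤ C₂ * ε := by
      intro z hz
      rw [Set.uIoc_of_le (by linarith)] at hz
      have hzmem : z ∈ Set.Icc (0:ℝ) L := ⟨ha0.trans hz.1.le, hz.2.trans hjL⟩
      have hza : |z - a| ≤ ε := by
        rw [abs_of_pos (by linarith [hz.1] : (0:ℝ) < z - a)]; linarith [hz.2]
      rw [Real.norm_eq_abs]
      set w := z / ε
      have hdecomp : F z - ψ z =
          (((k z w)⁻¹ - m₀ z) - ((k a w)⁻¹ - m₀ a)) * G z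
            + ((k a w)⁻¹ - m₀ a) * (G z - G a) := by
        rw [hFdef, hψdef]; ring
      rw [hdecomp]
      have hP : |((k z w)⁻¹ - m₀ z) - ((k a w)⁻¹ - m₀ a)| ≤ 2 * K / α ^ 2 * ε := by
        have h1 := hkLip w z hzmem a haL
        have h2 := hm₀Lip z hzmem a haL
        have habs : |((k z w)⁻¹ - m₀ z) - ((k a w)⁻¹ - m₀ a)|
            ≤ |(k z w)⁻¹ - (k a w)⁻¹| + |m₀ z - m₀ a| := by
          have : ((k z w)⁻¹ - m₀ z) - ((k a w)⁻¹ - m₀ a)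
              = ((k z w)⁻¹ - (k a w)⁻¹) - (m₀ z - m₀ a) := by ring
          rw [this]; exact abs_sub _ _
        have hKα : 0 ≤ K / α ^ 2 := by positivity
        calc |((k z w)⁻¹ - m₀ z) - ((k a w)⁻¹ - m₀ a)|
            ≤ |(k z w)⁻¹ - (k a w)⁻¹| + |m₀ z - m₀ a| := habs
          _ ≤ K / α ^ 2 * |z - a| + K / α ^ 2 * |z - a| := add_le_add h1 h2
          _ ≤ K / α ^ 2 * ε + K / α ^ 2 * ε := by
              have := mul_le_mul_of_nonneg_left hza hKα; linarith
          _ = 2 * K / α ^ 2 * ε := by ring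
      have hQ : |(k a w)⁻¹ - m₀ a| ≤ α⁻¹ + α⁻¹ := by
        have ha' : |(k a w)⁻¹| ≤ α⁻¹ := by
          rw [abs_of_pos (inv_pos.mpr (hα.trans_le (hlb _ _)))]; exact hkinv_ub _ _
        have hb' : |m₀ a| ≤ α⁻¹ := by
          rw [abs_of_pos (hm₀pos a)]; exact hm₀ub a
        calc |(k a w)⁻¹ - m₀ a| ≤ |(k a w)⁻¹| + |m₀ a| := abs_sub _ _
          _ ≤ α⁻¹ + α⁻¹ := add_le_add ha' hb'
      have hGza : |G z - G a| ≤ KG' * ε := by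
        have := hGd z hzmem a haL
        nlinarith
      calc |(((k z w)⁻¹ - m₀ z) - ((k a w)⁻¹ - m₀ a)) * G z
            + ((k a w)⁻¹ - m₀ a) * (G z - G a)|
          ≤ |(((k z w)⁻¹ - m₀ z) - ((k a w)⁻¹ - m₀ a)) * G z|
            + |((k a w)⁻¹ - m₀ a) * (G z - G a)| := abs_add_le _ _
        _ = |((k z w)⁻¹ - m₀ z) - ((k a w)⁻¹ - m₀ a)| * |G z|
            + |(k a w)⁻¹ - m₀ a| * |G z - G a| := by rw [abs_mul, abs_mul]
        _ ≤ (2 * K / α ^ 2 * ε) * MG + (α⁻¹ + α⁻¹) * (KG' * ε) := by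
            apply add_le_add
            · exact mul_le_mul hP (hGb z hzmem) (abs_nonneg _) (by positivity)
            · exact mul_le_mul hQ hGza (abs_nonneg _) (by positivity)
        _ = C₂ * ε := by rw [hC₂def]; ring
    have := intervalIntegral.norm_integral_le_of_norm_le_const hbound
    rw [Real.norm_eq_abs] at this
    calc |∫ z in a..(a + ε), (F z - ψ z)| ≤ C₂ * ε * |a + ε - a| := this
      _ = C₂ * ε ^ 2 := by
          rw [add_sub_cancel_left, abs_of_pos hε0]; ring
  -- partition of [0, L]
  set N : ℕ := ⌊L / ε⌋₊ with hNdef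
  have hNε : (N:ℝ) * ε ≤ L := by
    have := Nat.floor_le (div_nonneg hL.le hε0.le)
    calc (N:ℝ) * ε ≤ (L / ε) * ε := by
          apply mul_le_mul_of_nonneg_right _ hε0.le
          exact this
      _ = L := by field_simp
  have hLN : L - (N:ℝ) * ε ≤ ε := by
    have := Nat.lt_floor_add_one (L / ε)
    have h : L < ((N:ℝ) + 1) * ε := by
      rw [← div_lt_iff₀ hε0]; exact_mod_cast this
    nlinarith
  set A : ℕ → ℝ := fun j => (j:ℝ) * ε with hAdef
  have hAsucc : ∀ j : ℕ, A (j + 1) = A j + ε := by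
    intro j; rw [hAdef]; push_cast; ring
  have hAint : ∀ j : ℕ, j < N → IntervalIntegrable F volume (A j) (A (j + 1)) := by
    intro j hj
    apply hFint
    rw [hAsucc j]
    have hAj : A j = (j:ℝ) * ε := rfl
    have hjL : (A j) + ε ≤ L := by
      have h1 : ((j:ℝ) + 1) ≤ (N:ℝ) := by exact_mod_cast Nat.succ_le_of_lt hj
      have h2 : ((j:ℝ) + 1) * ε ≤ (N:ℝ) * ε := mul_le_mul_of_nonneg_right h1 hε0.le
      have h3 : ((j:ℝ) + 1) * ε = (j:ℝ) * ε + ε := by ring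
      rw [hAj]; linarith [hNε]
    have hj0 : (0:ℝ) ≤ A j := by rw [hAj]; positivity
    rw [Set.uIcc_of_le (by linarith)]
    exact Set.Icc_subset_Icc hj0 hjL
  have hsum : (∑ j ∈ Finset.range N, ∫ z in (A j)..(A (j + 1)), F z)
      = ∫ z in (A 0)..(A N), F z :=
    intervalIntegral.sum_integral_adjacent_intervals hAint
  have hA0 : A 0 = 0 := by show ((0:ℕ):ℝ) * ε = 0; simp
  have hANL : A N ≤ L := hNε
  have hAN0 : (0:ℝ) ≤ A N := by show (0:ℝ) ≤ (N:ℝ) * ε; positivity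
  have hsplit : (∫ z in (0:ℝ)..L, F z)
      = (∫ z in (A 0)..(A N), F z) + ∫ z in (A N)..L, F z := by
    rw [hA0]
    exact (intervalIntegral.integral_add_adjacent_intervals
      (hFint 0 (A N) (by rw [Set.uIcc_of_le hAN0]; exact Set.Icc_subset_Icc le_rfl hANL))
      (hFint (A N) L (by rw [Set.uIcc_of_le hANL]; exact Set.Icc_subset_Icc hAN0 le_rfl))).symm
  -- bound on the main sum
  have hmain : |∫ z in (A 0)..(A N), F z| ≤ C₂ * L * ε := by
    rw [← hsum]
    calc |∑ j ∈ Finset.range N, ∫ z in (A j)..(A (j + 1)), F z|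
        ≤ ∑ j ∈ Finset.range N, |∫ z in (A j)..(A (j + 1)), F z| :=
          Finset.abs_sum_le_sum_abs _ _
      _ ≤ ∑ j ∈ Finset.range N, C₂ * ε ^ 2 := by
          apply Finset.sum_le_sum
          intro j hj
          rw [Finset.mem_range] at hj
          have hjL : (j:ℝ) * ε + ε ≤ L := by
            have h1 : ((j:ℝ) + 1) ≤ (N:ℝ) := by exact_mod_cast Nat.succ_le_of_lt hj
            have h2 : ((j:ℝ) + 1) * ε ≤ (N:ℝ) * ε := mul_le_mul_of_nonneg_right h1 hε0.le
            have h3 : ((j:ℝ) + 1) * ε = (j:ℝ) * ε + ε := by ring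
            linarith [hNε]
          have := key j hjL
          rw [hAsucc j]
          exact this
      _ = (N:ℝ) * (C₂ * ε ^ 2) := by rw [Finset.sum_const, Finset.card_range]; push_cast; ring
      _ = ((N:ℝ) * ε) * (C₂ * ε) := by ring
      _ ≤ L * (C₂ * ε) := by
          apply mul_le_mul_of_nonneg_right hNε (by positivity)
      _ = C₂ * L * ε := by ring
  -- bound on the tail
  have htail : |∫ z in (A N)..L, F z| ≤ MF * ε := by
    have hbound : ∀ z ∈ Set.uIoc (A N) L, ‖F z‖ ≤ MF := by
      intro z hz
      rw [Set.uIoc_of_le hANL] at hz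
      rw [Real.norm_eq_abs]
      exact hFb z ⟨hAN0.trans hz.1.le, hz.2⟩
    have := intervalIntegral.norm_integral_le_of_norm_le_const hbound
    rw [Real.norm_eq_abs] at this
    calc |∫ z in (A N)..L, F z| ≤ MF * |L - A N| := this
      _ ≤ MF * ε := by
          apply mul_le_mul_of_nonneg_left _ hMF0
          have hAN : A N = (N:ℝ) * ε := rfl
          rw [hAN, abs_of_nonneg (by linarith [hNε])]
          exact hLN
  -- final assembly
  have hdiff : (∫ z in (0:ℝ)..L, (k z (z / ε))⁻¹ * G z)
      - (∫ z in (0:ℝ)..L, (k₀ z)⁻¹ * G z) = ∫ z in (0:ℝ)..L, F z := by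
    have hint1 : IntervalIntegrable (fun z => (k z (z / ε))⁻¹ * G z) volume 0 L := by
      apply ContinuousOn.intervalIntegrable
      rw [Set.uIcc_of_le hL.le]
      exact c1.continuousOn.mul hG.continuousOn
    have hint2 : IntervalIntegrable (fun z => m₀ z * G z) volume 0 L := by
      apply ContinuousOn.intervalIntegrable
      rw [Set.uIcc_of_le hL.le]
      exact hm₀cont.mul hG.continuousOn
    have h2 : (∫ z in (0:ℝ)..L, (k₀ z)⁻¹ * G z) = ∫ z in (0:ℝ)..L, m₀ z * G z := by
      simp only [hk₀inv]
    rw [h2, ← intervalIntegral.integral_sub hint1 hint2]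
    congr 1
    funext z
    rw [hFdef]; ring
  rw [hdiff, hsplit]
  calc |(∫ z in (A 0)..(A N), F z) + ∫ z in (A N)..L, F z|
      ≤ |∫ z in (A 0)..(A N), F z| + |∫ z in (A N)..L, F z| := abs_add_le _ _
    _ ≤ C₂ * L * ε + MF * ε := add_le_add hmain htail
    _ = (C₂ * L + MF) * ε := by ring
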